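/- For every n ≥ 1 and 1 ≤ i ≤ n, the following identity holds in ℤ: ∑_{j=1}^{n} (−1)^{j+1} · C(2n−i−1, n−i−j+1) · C(n+j−2, n−1) · C(2n−j−1, n−1) = C(n+i−2, n−1) · C(2n−i−1, n−1). (Equivalently, ∑_{j=1}^{n} (−1)^{j+1} C(2n−i−1, n−i−j+1) |B_{n,j}| = |B_{n,i}|.) -/

import Mathlib

/-- Alternating Vandermonde / finite difference lemma. -/
lemma difference_lemma : ∀ (m r N : ℕ), m ≤ r →
    ∑ s ∈ Finset.range (m + 1),
      (-1 : ℤ) ^ (m + s) * (m.choose s : ℤ) * ((N + s).choose r : ℤ)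
      = ((N.choose (r - m) : ℕ) : ℤ) := by
  intro m
  induction m with
  | zero => intro r N _; simp
  | succ m ih =>
    intro r N h
    have hm : m ≤ r := Nat.le_of_succ_le h
    rw [Finset.sum_range_succ']
    have key : ∀ s : ℕ,
        (-1 : ℤ) ^ (m + 1 + (s + 1)) * ((m + 1).choose (s + 1) : ℤ) * ((N + (s + 1)).choose r : ℤ)
          = (-1 : ℤ) ^ (m + s) * (m.choose s : ℤ) * ((N + 1 + s).choose r : ℤ)
            + (-1 : ℤ) ^ (m + s) * (m.choose (s + 1) : ℤ) * ((N + 1 + s).choose r : ℤ) := by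
      intro s
      rw [Nat.choose_succ_succ]
      have h1 : m + 1 + (s + 1) = (m + s) + 2 := by ring
      have h2 : N + (s + 1) = N + 1 + s := by ring
      rw [h1, h2, pow_add]
      push_cast
      ring
    simp only [key]
    rw [Finset.sum_add_distrib]
    rw [ih r (N + 1) hm]
    -- second sum: drop the (zero) top term and relate to ih r N
    have htop : ((-1 : ℤ) ^ (m + m) * (m.choose (m + 1) : ℤ) * ((N + 1 + m).choose r : ℤ)) = 0 := by
      simp [Nat.choose_eq_zero_of_lt (Nat.lt_succ_self m)]
    have hsum2 : ∑ s ∈ Finset.range (m + 1),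
        (-1 : ℤ) ^ (m + s) * (m.choose (s + 1) : ℤ) * ((N + 1 + s).choose r : ℤ)
        = -((N.choose (r - m) : ℤ) - (-1 : ℤ) ^ (m + 0) * (N.choose r : ℤ)) := by
      rw [Finset.sum_range_succ, htop, add_zero]
      have := ih r N hm
      rw [Finset.sum_range_succ'] at this
      have : ∑ s ∈ Finset.range m,
          (-1 : ℤ) ^ (m + (s + 1)) * (m.choose (s + 1) : ℤ) * ((N + (s + 1)).choose r : ℤ)
          = (N.choose (r - m) : ℤ) - (-1 : ℤ) ^ (m + 0) * (m.choose 0 : ℤ) * ((N + 0).choose r : ℤ) := by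
        linarith [this]
      calc ∑ s ∈ Finset.range m,
            (-1 : ℤ) ^ (m + s) * (m.choose (s + 1) : ℤ) * ((N + 1 + s).choose r : ℤ)
          = -∑ s ∈ Finset.range m,
            (-1 : ℤ) ^ (m + (s + 1)) * (m.choose (s + 1) : ℤ) * ((N + (s + 1)).choose r : ℤ) := by
            rw [← Finset.sum_neg_distrib]
            apply Finset.sum_congr rfl
            intro s _
            have : m + (s + 1) = (m + s) + 1 := by ring
            rw [this, pow_succ]
            have h2 : N + (s + 1) = N + 1 + s := by ring
            rw [h2]
            ring
        _ = -((N.choose (r - m) : ℤ) - (-1 : ℤ) ^ (m + 0) * (N.choose r : ℤ)) := by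
            rw [this]; simp
    rw [hsum2]
    have hpas : ((N + 1).choose (r - m) : ℤ) = (N.choose (r - (m + 1)) : ℤ) + (N.choose (r - m) : ℤ) := by
      have h3 : r - m = (r - (m + 1)) + 1 := by omega
      rw [h3, Nat.choose_succ_succ]
      push_cast; ring
    rw [hpas]
    simp [pow_succ]

/-- The linear relation satisfied by the numbers `|B_{n,j}| = C(n+j−2,n−1)·C(2n−j−1,n−1)`:
`∑_{j=1}^{n} (−1)^{j+1} C(2n−i−1, n−i−j+1) |B_{n,j}| = |B_{n,i}|`
(the binomial coefficient is 0 when its lower index `n−i−j+1` is negative,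
i.e. when `j > n−i+1`). -/
theorem b_linear_relation (n i : ℕ) (hn : 1 ≤ n) (hi1 : 1 ≤ i) (hin : i ≤ n) :
    (∑ j ∈ Finset.Icc 1 n,
        (-1 : ℤ) ^ (j + 1) *
        (if j ≤ n - i + 1 then ((2 * n - i - 1).choose (n - i + 1 - j) : ℤ) else 0) *
        ((n + j - 2).choose (n - 1) : ℤ) * ((2 * n - j - 1).choose (n - 1) : ℤ)) =
      ((n + i - 2).choose (n - 1) : ℤ) * ((2 * n - i - 1).choose (n - 1) : ℤ) := by
  obtain ⟨d, rfl⟩ := Nat.exists_eq_add_of_le hin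
  obtain ⟨c, rfl⟩ := Nat.exists_eq_add_of_le hi1
  rw [show Finset.Icc 1 (1 + c + d) = Finset.Ico 1 (1 + c + d + 1) from (by rw [Finset.Ico_add_one_right_eq_Icc])]
  rw [Finset.sum_Ico_eq_sum_range]
  have hrange : 1 + c + d + 1 - 1 = c + d + 1 := by omega
  rw [hrange]
  -- clean up each term
  have hclean : ∀ k : ℕ,
      ((-1 : ℤ) ^ (1 + k + 1) *
          (if 1 + k ≤ 1 + c + d - (1 + c) + 1 then
            ((2 * (1 + c + d) - (1 + c) - 1).choose (1 + c + d - (1 + c) + 1 - (1 + k)) : ℤ)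
          else 0) *
          ((1 + c + d + (1 + k) - 2).choose (1 + c + d - 1) : ℤ) *
          ((2 * (1 + c + d) - (1 + k) - 1).choose (1 + c + d - 1) : ℤ))
        = (-1 : ℤ) ^ k *
          (if k ≤ d then (((c + 2 * d).choose (d - k) : ℕ) : ℤ) else 0) *
          (((c + d + k).choose (c + d) : ℕ) : ℤ) *
          (((2 * c + 2 * d - k).choose (c + d) : ℕ) : ℤ) := by
    intro k
    have e1 : 2 * (1 + c + d) - (1 + c) - 1 = c + 2 * d := by omega
    have e2 : 1 + c + d - (1 + c) + 1 = d + 1 := by omega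
    have e3 : d + 1 - (1 + k) = d - k := by omega
    have e4 : 1 + c + d + (1 + k) - 2 = c + d + k := by omega
    have e5 : 2 * (1 + c + d) - (1 + k) - 1 = 2 * c + 2 * d - k := by omega
    have e6 : 1 + c + d - 1 = c + d := by omega
    have e8 : (-1 : ℤ) ^ (1 + k + 1) = (-1 : ℤ) ^ k := by
      have : 1 + k + 1 = k + 2 := by ring
      rw [this, pow_add]; norm_num
    rw [e1, e2, e3, e4, e5, e6, e8]
    simp only [show (1 + k ≤ d + 1) ↔ (k ≤ d) by omega]
  simp only [hclean]
  -- restrict the sum to range (d+1)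
  have hsub : Finset.range (d + 1) ⊆ Finset.range (c + d + 1) := by
    apply Finset.range_subset_range.mpr; omega
  rw [← Finset.sum_subset hsub (by
    intro x _ hx
    rw [Finset.mem_range, not_lt] at hx
    have : ¬ (x ≤ d) := by omega
    rw [if_neg this]
    ring)]
  -- rewrite each term via trinomial revision
  have htri : ∀ k ∈ Finset.range (d + 1),
      ((-1 : ℤ) ^ k * (if k ≤ d then (((c + 2 * d).choose (d - k) : ℕ) : ℤ) else 0) *
        (((c + d + k).choose (c + d) : ℕ) : ℤ) * (((2 * c + 2 * d - k).choose (c + d) : ℕ) : ℤ))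
      = (((c + 2 * d).choose (c + d) : ℕ) : ℤ) *
        ((-1 : ℤ) ^ k * ((d.choose k : ℕ) : ℤ) * (((2 * c + 2 * d - k).choose (c + d) : ℕ) : ℤ)) := by
    intro k hk
    rw [Finset.mem_range] at hk
    have hkd : k ≤ d := by omega
    rw [if_pos hkd]
    have key : (c + 2 * d).choose (d - k) * (c + d + k).choose (c + d)
        = (c + 2 * d).choose (c + d) * d.choose k := by
      have h1 := Nat.choose_mul (n := c + 2 * d) (k := d) (show d - k ≤ d by omega)
      -- h1 : (c+2d).choose d * d.choose (d-k) = (c+2d).choose (d-k) * ((c+2d)-(d-k)).choose (d-(d-k))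
      have h2 : c + 2 * d - (d - k) = c + d + k := by omega
      have h3 : d - (d - k) = k := by omega
      rw [h2, h3] at h1
      have h4 : (c + d + k).choose k = (c + d + k).choose (c + d) := by
        rw [← Nat.choose_symm (show c + d ≤ c + d + k by omega)]
        congr 1; omega
      have h5 : (c + 2 * d).choose d = (c + 2 * d).choose (c + d) := by
        rw [← Nat.choose_symm (show c + d ≤ c + 2 * d by omega)]
        congr 1; omega
      have h6 : d.choose (d - k) = d.choose k := by
        rw [Nat.choose_symm hkd]
      rw [h4] at h1
      rw [h5, h6] at h1
      omega
    have keyz : (((c + 2 * d).choose (d - k) : ℕ) : ℤ) * (((c + d + k).choose (c + d) : ℕ) : ℤ)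
        = (((c + 2 * d).choose (c + d) : ℕ) : ℤ) * ((d.choose k : ℕ) : ℤ) := by
      exact_mod_cast congrArg (Nat.cast : ℕ → ℤ) key
    calc (-1 : ℤ) ^ k * (((c + 2 * d).choose (d - k) : ℕ) : ℤ) *
          (((c + d + k).choose (c + d) : ℕ) : ℤ) * (((2 * c + 2 * d - k).choose (c + d) : ℕ) : ℤ)
        = (-1 : ℤ) ^ k * ((((c + 2 * d).choose (d - k) : ℕ) : ℤ) *
            (((c + d + k).choose (c + d) : ℕ) : ℤ)) * (((2 * c + 2 * d - k).choose (c + d) : ℕ) : ℤ) := by ring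
      _ = (-1 : ℤ) ^ k * ((((c + 2 * d).choose (c + d) : ℕ) : ℤ) * ((d.choose k : ℕ) : ℤ)) *
            (((2 * c + 2 * d - k).choose (c + d) : ℕ) : ℤ) := by rw [keyz]
      _ = (((c + 2 * d).choose (c + d) : ℕ) : ℤ) *
            ((-1 : ℤ) ^ k * ((d.choose k : ℕ) : ℤ) * (((2 * c + 2 * d - k).choose (c + d) : ℕ) : ℤ)) := by ring
  rw [Finset.sum_congr rfl htri, ← Finset.mul_sum]
  -- reflect and apply difference_lemma
  have hrefl : ∑ k ∈ Finset.range (d + 1),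
      ((-1 : ℤ) ^ k * ((d.choose k : ℕ) : ℤ) * (((2 * c + 2 * d - k).choose (c + d) : ℕ) : ℤ))
      = ∑ k ∈ Finset.range (d + 1),
      ((-1 : ℤ) ^ (d + k) * ((d.choose k : ℕ) : ℤ) * (((2 * c + d + k).choose (c + d) : ℕ) : ℤ)) := by
    rw [← Finset.sum_range_reflect
      (fun k => (-1 : ℤ) ^ (d + k) * ((d.choose k : ℕ) : ℤ) * (((2 * c + d + k).choose (c + d) : ℕ) : ℤ))
      (d + 1)]
    apply Finset.sum_congr rfl
    intro k hk
    rw [Finset.mem_range] at hk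
    have hkd : k ≤ d := by omega
    have e1 : d + 1 - 1 - k = d - k := by omega
    rw [e1]
    have e2 : (-1 : ℤ) ^ (d + (d - k)) = (-1 : ℤ) ^ k := by
      have : d + (d - k) = k + 2 * (d - k) := by omega
      rw [this, pow_add, pow_mul]; norm_num
    have e3 : d.choose (d - k) = d.choose k := Nat.choose_symm hkd
    have e4 : 2 * c + d + (d - k) = 2 * c + 2 * d - k := by omega
    rw [e2, e3, e4]
  rw [hrefl, difference_lemma d (c + d) (2 * c + d) (by omega)]
  have e5 : c + d - d = c := by omega
  rw [e5]
  have e6 : (2 * c + d).choose c = (2 * c + d).choose (c + d) := by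
    rw [← Nat.choose_symm (show c + d ≤ 2 * c + d by omega)]
    congr 1; omega
  rw [e6]
  have e7 : 1 + c + d + (1 + c) - 2 = 2 * c + d := by omega
  have e8 : 2 * (1 + c + d) - (1 + c) - 1 = c + 2 * d := by omega
  have e9 : 1 + c + d - 1 = c + d := by omega
  rw [e7, e8, e9]
  ring
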